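/- Let (M, g) be a spacetime of dimension D ≥ 3 satisfying the null energy condition, let S be a timelike photon surface with unit normal n, and let γ be a null geodesic on S whose tangent vector k at p ∈ S points in a principal null direction of the Weyl tensor, i.e. k^b k^c k_{[e} C_{a]bc[d} k_{f]} = 0 at p. Then γ is stable or marginally stable at p: R_{acbd} k^a n^c k^b n^d ≥ 0 at p. -/

import Mathlib

set_option autoImplicit false

noncomputable section

/-- An abstract `D`-dimensional spacetime `(M, g)`: a family of tangent spaces over a
type of points, equipped with a Lorentzian metric, curvature tensors and covariant
derivative operators.  The standard differential-geometric identities relating these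
data that are relevant below are recorded as fields, so that the structure is an
axiomatisation of a smooth Lorentzian manifold. -/
structure Spacetime (D : ℕ) where
  /-- the points of the spacetime manifold `M` -/
  Point : Type
  /-- the tangent space at each point -/
  Vec : Point → Type
  [vecGroup : ∀ p : Point, AddCommGroup (Vec p)]
  [vecModule : ∀ p : Point, Module ℝ (Vec p)]
  [vecFin : ∀ p : Point, FiniteDimensional ℝ (Vec p)]
  dim_eq : ∀ p : Point, Module.finrank ℝ (Vec p) = D
  /-- the metric at each point, as a bilinear form -/
  g : ∀ p : Point, Vec p →ₗ[ℝ] Vec p →ₗ[ℝ] ℝ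
  g_symm : ∀ (p : Point) (u v : Vec p), g p u v = g p v u
  g_nondeg : ∀ (p : Point) (u : Vec p), (∀ v : Vec p, g p u v = 0) → u = 0
  /-- Lorentzian signature `(-,+,⋯,+)` -/
  lorentzian : ∀ p : Point, ∃ b : Module.Basis (Fin D) ℝ (Vec p), ∀ i j : Fin D,
    g p (b i) (b j) = if i = j then (if (i : ℕ) = 0 then (-1 : ℝ) else 1) else 0
  /-- `IsVelocity c v` asserts that `v t ∈ T_{c t} M` is the velocity (tangent) field
  of the smooth curve `c : ℝ → M`. -/
  IsVelocity : (c : ℝ → Point) → (∀ t, Vec (c t)) → Prop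
  /-- covariant derivative of a vector field along a curve -/
  covDerivAlong : (c : ℝ → Point) → (∀ t, Vec (c t)) → (∀ t, Vec (c t))
  /-- directional derivative of a scalar field -/
  dirDeriv : (Point → ℝ) → ∀ p : Point, Vec p →ₗ[ℝ] ℝ
  /-- covariant derivative `∇Y` of a vector field, linear in the direction -/
  covDerivVF : (∀ p, Vec p) → ∀ p : Point, Vec p →ₗ[ℝ] Vec p
  /-- covariant derivative `(∇_u T)(·,·)` of a `(0,2)`-tensor field in a direction `u` -/
  covDeriv2 : (∀ p, Vec p → Vec p → ℝ) → ∀ p : Point, Vec p → (Vec p → Vec p → ℝ)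
  dirDeriv_const : ∀ (a : ℝ) (p : Point) (u : Vec p), dirDeriv (fun _ => a) p u = 0
  /-- metric compatibility of the covariant derivative -/
  metric_compat : ∀ (Y Z : ∀ p, Vec p) (p : Point) (u : Vec p),
    dirDeriv (fun q => g q (Y q) (Z q)) p u
      = g p (covDerivVF Y p u) (Z p) + g p (Y p) (covDerivVF Z p u)
  /-- along a curve, `(T(W,W))' = (∇_{ċ} T)(W,W)` whenever `W` is parallel -/
  covDeriv2_parallel : ∀ (T : ∀ p, Vec p → Vec p → ℝ) (c : ℝ → Point)
    (v : ∀ t, Vec (c t)), IsVelocity c v →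
    ∀ (W : ∀ t, Vec (c t)), (∀ t, covDerivAlong c W t = 0) →
    ∀ t : ℝ, HasDerivAt (fun s => T (c s) (W s) (W s)) (covDeriv2 T (c t) (v t) (W t) (W t)) t
  /-- the Riemann curvature tensor, fully covariant:
  `Riemann p x y z w = R_{abcd} x^a y^b z^c w^d` -/
  Riemann : ∀ p : Point, Vec p →ₗ[ℝ] Vec p →ₗ[ℝ] Vec p →ₗ[ℝ] Vec p →ₗ[ℝ] ℝ
  riemann_antisym₁ : ∀ (p : Point) (x y z w : Vec p), Riemann p x y z w = - Riemann p y x z w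
  riemann_antisym₂ : ∀ (p : Point) (x y z w : Vec p), Riemann p x y z w = - Riemann p x y w z
  riemann_pair_symm : ∀ (p : Point) (x y z w : Vec p), Riemann p x y z w = Riemann p z w x y
  /-- the Ricci tensor -/
  Ricci : ∀ p : Point, Vec p →ₗ[ℝ] Vec p →ₗ[ℝ] ℝ
  ricci_symm : ∀ (p : Point) (x y : Vec p), Ricci p x y = Ricci p y x
  /-- the scalar curvature -/
  Scal : Point → ℝ
  /-- the Weyl tensor, fully covariant, with the same index conventions as `Riemann` -/
  Weyl : ∀ p : Point, Vec p →ₗ[ℝ] Vec p →ₗ[ℝ] Vec p →ₗ[ℝ] Vec p →ₗ[ℝ] ℝ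
  weyl_antisym₁ : ∀ (p : Point) (x y z w : Vec p), Weyl p x y z w = - Weyl p y x z w
  weyl_antisym₂ : ∀ (p : Point) (x y z w : Vec p), Weyl p x y z w = - Weyl p x y w z
  weyl_pair_symm : ∀ (p : Point) (x y z w : Vec p), Weyl p x y z w = Weyl p z w x y
  /-- the Weyl tensor is totally trace-free -/
  weyl_traceFree : ∀ (p : Point) (b : Module.Basis (Fin D) ℝ (Vec p)) (s : Fin D → ℝ),
    (∀ i j : Fin D, g p (b i) (b j) = if i = j then s i else 0) →
    ∀ x y : Vec p, (∑ i : Fin D, s i * Weyl p (b i) x (b i) y) = 0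
  /-- the decomposition of the Riemann tensor into its Weyl, Ricci and scalar parts -/
  weyl_decomposition : 3 ≤ D → ∀ (p : Point) (x y z w : Vec p),
    Riemann p x y z w =
      Weyl p x y z w
      + ((D : ℝ) - 2)⁻¹ * (g p x z * Ricci p y w - g p x w * Ricci p y z
          + g p y w * Ricci p x z - g p y z * Ricci p x w)
      - Scal p / (((D : ℝ) - 1) * ((D : ℝ) - 2))
          * (g p x z * g p y w - g p x w * g p y z)

attribute [instance] Spacetime.vecGroup Spacetime.vecModule Spacetime.vecFin

namespace Spacetime

variable {D : ℕ} (X : Spacetime D)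

/-- transport of a tangent vector along an equality of base points -/
def vcast {p q : X.Point} (h : p = q) (v : X.Vec p) : X.Vec q := h ▸ v

/-- an affinely parametrised geodesic, given by a curve together with its velocity field -/
def IsGeodesic (c : ℝ → X.Point) (v : ∀ t, X.Vec (c t)) : Prop :=
  X.IsVelocity c v ∧ ∀ t : ℝ, X.covDerivAlong c v t = 0

/-- a null affinely parametrised geodesic -/
def IsNullGeodesic (c : ℝ → X.Point) (v : ∀ t, X.Vec (c t)) : Prop :=
  X.IsGeodesic c v ∧ ∀ t : ℝ, X.g (c t) (v t) (v t) = 0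

end Spacetime

/-- A hypersurface `S` of an abstract spacetime, given by its carrier set together with
its tangent hyperplanes, a unit normal, and its shape operator (the second fundamental
form with one index raised). -/
structure Hypersurface {D : ℕ} (X : Spacetime D) where
  carrier : Set X.Point
  /-- the tangent hyperplane `T_p S ⊂ T_p M` -/
  tangent : ∀ (p : X.Point), p ∈ carrier → Submodule ℝ (X.Vec p)
  tangent_rank : ∀ (p : X.Point) (hp : p ∈ carrier),
    Module.finrank ℝ (tangent p hp) = D - 1
  /-- the unit normal `n` of `S` -/
  normal : ∀ (p : X.Point), p ∈ carrier → X.Vec p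
  normal_orth : ∀ (p : X.Point) (hp : p ∈ carrier),
    ∀ v ∈ tangent p hp, X.g p (normal p hp) v = 0
  /-- the shape operator `χ^a{}_b` of `S`, extended to all of `T_p M` by `χ(n) = 0` -/
  shape : ∀ (p : X.Point), p ∈ carrier → (X.Vec p →ₗ[ℝ] X.Vec p)
  shape_symm : ∀ (p : X.Point) (hp : p ∈ carrier) (u v : X.Vec p),
    X.g p (shape p hp u) v = X.g p (shape p hp v) u
  shape_normal : ∀ (p : X.Point) (hp : p ∈ carrier), shape p hp (normal p hp) = 0
  shape_tangent : ∀ (p : X.Point) (hp : p ∈ carrier) (u : X.Vec p),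
    shape p hp u ∈ tangent p hp
  /-- Gauss–Weingarten relation: along any curve inside the hypersurface, the second
  fundamental form applied to the velocity is minus the normal component of the
  acceleration, `χ(v,v) = − g(n, ∇_v v)`. -/
  sff_spec : ∀ (c : ℝ → X.Point) (v : ∀ t, X.Vec (c t)), X.IsVelocity c v →
    ∀ (hc : ∀ t, c t ∈ carrier) (t : ℝ),
      X.g (c t) (shape (c t) (hc t) (v t)) (v t)
        = - X.g (c t) (normal (c t) (hc t)) (X.covDerivAlong c v t)

namespace Hypersurface

variable {D : ℕ} {X : Spacetime D} (S : Hypersurface X)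

/-- the (fully covariant) second fundamental form `χ_{ab}` of `S` -/
def sff (p : X.Point) (hp : p ∈ S.carrier) (u v : X.Vec p) : ℝ :=
  X.g p (S.shape p hp u) v

/-- the trace `Θ = h^{ab} χ_{ab} = χ^a{}_a` of the second fundamental form -/
def theta (p : X.Point) (hp : p ∈ S.carrier) : ℝ :=
  LinearMap.trace ℝ (X.Vec p) (S.shape p hp)

/-- the projector `h^a{}_b = δ^a{}_b − n^a n_b` onto `S` (for a unit spacelike normal);
`g(proj ·, ·)` is the induced metric `h_{ab}`. -/
def proj (p : X.Point) (hp : p ∈ S.carrier) : X.Vec p →ₗ[ℝ] X.Vec p :=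
  LinearMap.id - (X.g p (S.normal p hp)).smulRight (S.normal p hp)

/-- the trace-free part `σ_{ab} = χ_{ab} − Θ h_{ab}/(D−1)` of the second
fundamental form of `S` -/
def sigma (p : X.Point) (hp : p ∈ S.carrier) (u v : X.Vec p) : ℝ :=
  X.g p ((S.shape p hp - (S.theta p hp / ((D : ℝ) - 1)) • S.proj p hp) u) v

/-- a timelike hypersurface: the unit normal is spacelike -/
def IsTimelike : Prop :=
  ∀ (p : X.Point) (hp : p ∈ S.carrier), X.g p (S.normal p hp) (S.normal p hp) = 1

/-- nowhere spacelike: at each point there is a nonzero causal tangent vector -/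
def NowhereSpacelike : Prop :=
  ∀ (p : X.Point) (hp : p ∈ S.carrier), ∃ v ∈ S.tangent p hp, v ≠ 0 ∧ X.g p v v ≤ 0

/-- **Photon surface** (Claudel–Virbhadra–Ellis): an immersed nowhere-spacelike
hypersurface `S` such that for every `p ∈ S` and every null `k ∈ T_p S` there is a null
geodesic `γ : (−ε, ε) → M` with `γ(0) = p`, `γ̇(0) = k`, whose image lies in `S`. -/
def IsPhotonSurface : Prop :=
  S.NowhereSpacelike ∧
  ∀ (p : X.Point) (hp : p ∈ S.carrier) (k : X.Vec p),
    k ∈ S.tangent p hp → X.g p k k = 0 →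
    ∃ (c : ℝ → X.Point) (v : ∀ t, X.Vec (c t)) (ε : ℝ),
      0 < ε ∧ X.IsVelocity c v ∧
      (∀ t : ℝ, |t| < ε → X.covDerivAlong c v t = 0) ∧
      (∀ t : ℝ, |t| < ε → X.g (c t) (v t) (v t) = 0) ∧
      (∃ h : c 0 = p, X.vcast h (v 0) = k) ∧
      (∀ t : ℝ, |t| < ε → c t ∈ S.carrier)

end Hypersurface

/-- `k` is a principal null direction of the Weyl tensor at `p`:
`k^b k^c k_{[e} C_{a]bc[d} k_{f]} = 0`. -/
def Spacetime.IsPrincipalNullAt {D : ℕ} (X : Spacetime D) (p : X.Point)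
    (k : X.Vec p) : Prop :=
  ∀ u v x y : X.Vec p,
    (1 / 4 : ℝ) *
      ((X.g p k v * X.Weyl p u k k x - X.g p k u * X.Weyl p v k k x) * X.g p k y
        - (X.g p k v * X.Weyl p u k k y - X.g p k u * X.Weyl p v k k y) * X.g p k x)
      = 0

/-- Let `(M,g)` be a spacetime of dimension `D ≥ 3` satisfying the
null energy condition, `S` a timelike photon surface with unit normal `n`, and `γ` a
null geodesic on `S` whose tangent `k` at `p ∈ S` points in a principal null direction
of the Weyl tensor.  Then `γ` is stable or marginally stable at `p`:
`R_{acbd} k^a n^c k^b n^d ≥ 0` at `p`. -/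
theorem principal_null_NEC_stable_or_marginal {D : ℕ} (hD : 3 ≤ D) (X : Spacetime D)
    (hNEC : ∀ (p : X.Point) (k : X.Vec p), X.g p k k = 0 → 0 ≤ X.Ricci p k k)
    (S : Hypersurface X) (hTL : S.IsTimelike) (hPS : S.IsPhotonSurface)
    (p : X.Point) (hp : p ∈ S.carrier)
    -- `γ` : a null geodesic on `S` with tangent `k` at `p`
    (c : ℝ → X.Point) (v : ∀ t, X.Vec (c t)) (hγ : X.IsNullGeodesic c v)
    (hγS : ∀ t : ℝ, c t ∈ S.carrier) (h0 : c 0 = p)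
    (k : X.Vec p) (hk : X.vcast h0 (v 0) = k) (hkt : k ∈ S.tangent p hp)
    (hk0 : k ≠ 0)
    -- `k` points in a principal null direction of the Weyl tensor at `p`
    (hPND : X.IsPrincipalNullAt p k) :
    0 ≤ X.Riemann p k (S.normal p hp) k (S.normal p hp) := by
  subst h0
  simp only [Spacetime.vcast] at hk
  have gkk : X.g (c 0) k k = 0 := by rw [← hk]; exact hγ.2 0
  set n := S.normal (c 0) hp with hn
  have gnn : X.g (c 0) n n = 1 := hTL _ hp
  have gnk : X.g (c 0) n k = 0 := S.normal_orth _ hp k hkt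
  have gkn : X.g (c 0) k n = 0 := by rw [X.g_symm]; exact gnk
  obtain ⟨w0, hw0⟩ : ∃ w0, X.g (c 0) k w0 ≠ 0 := by
    by_contra h
    push_neg at h
    exact hk0 (X.g_nondeg _ k h)
  set w := (X.g (c 0) k w0)⁻¹ • w0 with hw
  have gkw : X.g (c 0) k w = 1 := by
    simp [hw, map_smul, inv_mul_cancel₀ hw0]
  have hW : X.Weyl (c 0) n k k n = 0 := by
    have h1 := hPND n w n w
    rw [gkw, gkn] at h1
    linarith
  have hWk : X.Weyl (c 0) k n k n = 0 := by
    rw [X.weyl_antisym₁, hW]; ring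
  have hRic : 0 ≤ X.Ricci (c 0) k k := hNEC _ k gkk
  have hdec := X.weyl_decomposition hD (c 0) k n k n
  rw [gkk, gkn, gnn, gnk, hWk] at hdec
  have hD2 : (0:ℝ) < (D:ℝ) - 2 := by
    have h3 : (3:ℝ) ≤ D := by exact_mod_cast hD
    linarith
  rw [hdec]
  have hinv : (0:ℝ) ≤ ((D:ℝ) - 2)⁻¹ := le_of_lt (inv_pos.mpr hD2)
  nlinarith [mul_nonneg hinv hRic]
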